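/- Let $\omega \in \{0,1\}^n$ be a binary string with $\omega_0 = 0$ and $\omega_{n-1}=1$, let $N_n(\omega)$ be the number of indices $i<n$ with $\omega_i = 1$, and suppose $1 \le N_n(\omega)$. Define the run-length encoding $s(\omega) = (s_1,\dots,s_{N_n})$ where $s_j$ is the number of consecutive $0$s preceding the $j$-th occurrence of $1$, and define the information function $I_{s'}(\omega) = \sum_{j=1}^{N_n} (2\lfloor \log_2(1+s_j)\rfloor + 1)$. Then $N_n(\omega) + 2\log_2(n - N_n(\omega) + 1) - C \le I_{s'}(\omega) \le N_n(\omega) + 2 N_n(\omega) \log_2(n / N_n(\omega)) + C$ for an absolute constant $C$ independent of $n$ and $\omega$. -/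
import Mathlib

/-- Run-length encoding of a binary string: for each occurrence of `true`,
record the number of consecutive `false`s immediately preceding it
(trailing `false`s are discarded). -/
def runLengths : List Bool → List ℕ
  | [] => []
  | (b :: t) =>
    if b then 0 :: runLengths t
    else
      match runLengths t with
      | [] => []
      | (k :: r) => (k + 1) :: r

/-- The information content of the prefix-code run-length compression:
each run length `m` is encoded by `2⌊log₂(1+m)⌋ + 1` bits. -/
def infoContent (ω : List Bool) : ℝ :=
  ((runLengths ω).map (fun m => 2 * (Nat.log 2 (1 + m) : ℝ) + 1)).sum

lemma runLengths_true (t : List Bool) : runLengths (true :: t) = 0 :: runLengths t := by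
  rw [runLengths]; simp

lemma runLengths_false (t : List Bool) :
    runLengths (false :: t) = match runLengths t with
      | [] => []
      | (k :: r) => (k + 1) :: r := by
  rw [runLengths]; simp

lemma runLengths_spec : ∀ ω : List Bool, ω.getLast? = some true →
    (runLengths ω).length = ω.count true ∧ (runLengths ω).sum = ω.count false ∧
      runLengths ω ≠ [] := by
  intro ω
  induction ω with
  | nil => simp
  | cons b t ih =>
    intro hlast
    cases t with
    | nil =>
      simp only [List.getLast?_singleton, Option.some.injEq] at hlast
      subst hlast
      simp [runLengths]
    | cons c t' =>
      rw [List.getLast?_cons_cons] at hlast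
      obtain ⟨hlen, hsum, hne⟩ := ih hlast
      cases b with
      | true =>
        rw [runLengths_true]
        refine ⟨?_, ?_, ?_⟩ <;> simp [hlen, hsum, List.count_cons]
      | false =>
        obtain ⟨k, r, hkr⟩ := List.exists_cons_of_ne_nil hne
        have hrl : runLengths (false :: c :: t') = (k + 1) :: r := by
          rw [runLengths_false, hkr]
        rw [hkr] at hlen hsum
        refine ⟨?_, ?_, by simp [hrl]⟩ <;>
          · rw [hrl]
            cases c <;> simp [List.count_cons] at hlen hsum ⊢ <;> omega

lemma natlog_subadd (a b : ℕ) :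
    Nat.log 2 (1 + (a + b)) ≤ Nat.log 2 (1 + a) + Nat.log 2 (1 + b) := by
  have ha : 1 + a < 2 ^ (Nat.log 2 (1 + a) + 1) := Nat.lt_pow_succ_log_self (by norm_num) _
  have hb : 1 + b < 2 ^ (Nat.log 2 (1 + b) + 1) := Nat.lt_pow_succ_log_self (by norm_num) _
  have h : 1 + (a + b) < 2 ^ (Nat.log 2 (1 + a) + Nat.log 2 (1 + b) + 1) := by
    have h2 : (2 + a) * (2 + b) ≤ 2 ^ (Nat.log 2 (1 + a) + 1) * 2 ^ (Nat.log 2 (1 + b) + 1) :=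
      Nat.mul_le_mul (by omega) (by omega)
    have h3 : 2 ^ (Nat.log 2 (1 + a) + 1) * 2 ^ (Nat.log 2 (1 + b) + 1)
        = 2 * 2 ^ (Nat.log 2 (1 + a) + Nat.log 2 (1 + b) + 1) := by ring
    nlinarith [h2, h3]
  have := Nat.log_lt_of_lt_pow (by omega : 1 + (a + b) ≠ 0) h
  omega

lemma natlog_sum_le (l : List ℕ) :
    Nat.log 2 (1 + l.sum) ≤ (l.map (fun m => Nat.log 2 (1 + m))).sum := by
  induction l with
  | nil => simp
  | cons a t ih =>
    simp only [List.sum_cons, List.map_cons]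
    calc Nat.log 2 (1 + (a + t.sum)) ≤ Nat.log 2 (1 + a) + Nat.log 2 (1 + t.sum) :=
          natlog_subadd a t.sum
      _ ≤ Nat.log 2 (1 + a) + (t.map (fun m => Nat.log 2 (1 + m))).sum := by omega

lemma natlog_le_logb (m : ℕ) : (Nat.log 2 (1 + m) : ℝ) ≤ Real.logb 2 (1 + m) := by
  have h : (2 : ℕ) ^ Nat.log 2 (1 + m) ≤ 1 + m := Nat.pow_log_le_self 2 (by omega)
  have h' : (2 : ℝ) ^ Nat.log 2 (1 + m) ≤ (1 + m : ℝ) := by exact_mod_cast h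
  calc (Nat.log 2 (1 + m) : ℝ) = Real.logb 2 ((2 : ℝ) ^ Nat.log 2 (1 + m)) := by
        rw [Real.logb_pow, Real.logb_self_eq_one (by norm_num)]; ring
    _ ≤ Real.logb 2 (1 + m) :=
        Real.logb_le_logb_of_le (by norm_num) (by positivity) h'

lemma logb_le_natlog (m : ℕ) : Real.logb 2 (1 + m) ≤ (Nat.log 2 (1 + m) : ℝ) + 1 := by
  have h : 1 + m < (2 : ℕ) ^ (Nat.log 2 (1 + m) + 1) := Nat.lt_pow_succ_log_self (by norm_num) _
  have h' : ((1 + m : ℕ) : ℝ) ≤ (2 : ℝ) ^ (Nat.log 2 (1 + m) + 1) := by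
    exact_mod_cast h.le
  calc Real.logb 2 (1 + m) ≤ Real.logb 2 ((2 : ℝ) ^ (Nat.log 2 (1 + m) + 1)) := by
        apply Real.logb_le_logb_of_le (by norm_num) (by positivity)
        push_cast at h' ⊢; linarith
    _ = (Nat.log 2 (1 + m) : ℝ) + 1 := by
        rw [Real.logb_pow, Real.logb_self_eq_one (by norm_num)]; push_cast; ring

lemma sum_map_affine (l : List ℝ) (a b : ℝ) :
    (l.map (fun x => a + x * b)).sum = l.length * a + l.sum * b := by
  induction l with
  | nil => simp
  | cons y t ih => simp [ih]; ring

lemma sum_log_le (l : List ℝ) (hl : ∀ x ∈ l, 1 ≤ x) (hne : l ≠ []) :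
    (l.map Real.log).sum ≤ l.length * Real.log (l.sum / l.length) := by
  have hN : (0 : ℝ) < l.length := by
    have := List.length_pos_iff.mpr hne
    exact_mod_cast this
  have hsum : (l.length : ℝ) ≤ l.sum := by
    calc (l.length : ℝ) = (l.map (fun _ => (1:ℝ))).sum := by simp
      _ ≤ l.sum := by
          rw [show l.sum = (l.map id).sum by simp]
          exact List.sum_le_sum fun x hx => hl x hx
  have hspos : (0:ℝ) < l.sum := lt_of_lt_of_le hN hsum
  set c : ℝ := l.sum / l.length with hc
  have hcpos : 0 < c := div_pos hspos hN
  have key : ∀ x ∈ l, Real.log x ≤ (Real.log c - 1) + x * (1 / c) := by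
    intro x hx
    have hx1 := hl x hx
    have hdiv : Real.log (x / c) ≤ x / c - 1 := Real.log_le_sub_one_of_pos (by positivity)
    rw [Real.log_div (by linarith) (ne_of_gt hcpos)] at hdiv
    have : x / c = x * (1 / c) := by ring
    linarith [hdiv, this ▸ hdiv]
  calc (l.map Real.log).sum ≤ (l.map (fun x => (Real.log c - 1) + x * (1 / c))).sum :=
        List.sum_le_sum key
    _ = l.length * (Real.log c - 1) + l.sum * (1 / c) := sum_map_affine l _ _
    _ = l.length * Real.log c := by
        have h1 : l.sum * (1 / c) = l.length := by
          rw [hc]; field_simp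
        rw [h1]; ring
    _ = l.length * Real.log (l.sum / l.length) := by rw [hc]

lemma count_true_add_count_false (l : List Bool) :
    l.count true + l.count false = l.length := by
  induction l with
  | nil => simp
  | cons b t ih => cases b <;> simp [List.count_cons] <;> omega

lemma sum_map_two_mul_add_one (l : List ℕ) (f : ℕ → ℝ) :
    (l.map (fun m => 2 * f m + 1)).sum = 2 * (l.map f).sum + l.length := by
  induction l with
  | nil => simp
  | cons a t ih => simp [ih]; push_cast; ring

lemma sum_map_one_add (l : List ℕ) :
    (l.map (fun m : ℕ => 1 + (m:ℝ))).sum = l.length + l.sum := by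
  induction l with
  | nil => simp
  | cons a t ih => simp [ih]; push_cast; ring

lemma sum_map_logb (l : List ℕ) :
    (l.map (fun m : ℕ => Real.logb 2 (1 + (m:ℝ)))).sum
      = ((l.map (fun m : ℕ => 1 + (m:ℝ))).map Real.log).sum / Real.log 2 := by
  induction l with
  | nil => simp
  | cons a t ih =>
    simp only [List.map_cons, List.sum_cons]
    rw [ih, Real.logb, add_div]

/-- Lemma 3.3: for a binary string `ω` of length `n` starting with `0` and ending
with `1`, with `N` ones, the compressed information content satisfies
`N + 2 log₂(n - N + 1) - C ≤ I ≤ N + 2 N log₂(n/N) + C` for an absolute constant `C`. -/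
theorem infoContent_bounds :
    ∃ C : ℝ, ∀ (ω : List Bool),
      ω.head? = some false → ω.getLast? = some true → 1 ≤ ω.count true →
      let n := ω.length
      let N := ω.count true
      (N : ℝ) + 2 * Real.logb 2 ((n : ℝ) - (N : ℝ) + 1) - C ≤ infoContent ω ∧
      infoContent ω ≤ (N : ℝ) + 2 * (N : ℝ) * Real.logb 2 ((n : ℝ) / (N : ℝ)) + C := by
  refine ⟨2, fun ω h0 hlast hcnt => ?_⟩
  intro n N
  obtain ⟨hlen, hsum, hne⟩ := runLengths_spec ω hlast
  have hN : N = ω.count true := rfl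
  have hn : n = ω.length := rfl
  set l := runLengths ω with hl
  have hlenN : l.length = N := by rw [hN]; exact hlen
  have hNS : N + l.sum = n := by
    rw [hN, hn, hsum]; exact count_true_add_count_false ω
  have hNpos : 1 ≤ N := hcnt
  have hinfo : infoContent ω = 2 * (l.map (fun m => (Nat.log 2 (1 + m) : ℝ))).sum + N := by
    rw [infoContent, ← hl, sum_map_two_mul_add_one, hlenN]
  have hcast : (l.map (fun m => (Nat.log 2 (1 + m) : ℝ))).sum
      = ((l.map (fun m => Nat.log 2 (1 + m))).sum : ℝ) := by
    rw [Nat.cast_list_sum, List.map_map]; rfl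
  constructor
  · -- lower bound
    have h1 : (Nat.log 2 (1 + l.sum) : ℝ) ≤ (l.map (fun m => (Nat.log 2 (1 + m) : ℝ))).sum := by
      rw [hcast]
      exact_mod_cast natlog_sum_le l
    have h2 : Real.logb 2 (1 + (l.sum : ℝ)) - 1 ≤ (Nat.log 2 (1 + l.sum) : ℝ) := by
      linarith [logb_le_natlog l.sum]
    have h3 : ((n : ℝ) - (N : ℝ) + 1) = 1 + (l.sum : ℝ) := by
      have : (n : ℝ) = (N : ℝ) + (l.sum : ℝ) := by exact_mod_cast hNS.symm
      linarith
    rw [hinfo, h3]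
    linarith [h1, h2]
  · -- upper bound
    have h1 : (l.map (fun m => (Nat.log 2 (1 + m) : ℝ))).sum
        ≤ (l.map (fun m : ℕ => Real.logb 2 (1 + (m:ℝ)))).sum :=
      List.sum_le_sum fun m _ => natlog_le_logb m
    set L : List ℝ := l.map (fun m : ℕ => 1 + (m:ℝ)) with hL
    have hLne : L ≠ [] := by simp [hL, hne]
    have hLlen : L.length = N := by simp [hL, hlenN]
    have hLsum : L.sum = n := by
      rw [hL, sum_map_one_add, hlenN]
      exact_mod_cast hNS
    have hL1 : ∀ x ∈ L, 1 ≤ x := by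
      intro x hx
      simp only [hL, List.mem_map] at hx
      obtain ⟨m, _, rfl⟩ := hx
      have : (0:ℝ) ≤ m := Nat.cast_nonneg m
      linarith
    have hjensen := sum_log_le L hL1 hLne
    rw [hLlen, hLsum] at hjensen
    have hlog2 : 0 < Real.log 2 := Real.log_pos (by norm_num)
    have h3 : (l.map (fun m : ℕ => Real.logb 2 (1 + (m:ℝ)))).sum
        ≤ (N : ℝ) * Real.logb 2 ((n : ℝ) / (N : ℝ)) := by
      rw [sum_map_logb, ← hL]
      calc (L.map Real.log).sum / Real.log 2
          ≤ ((N : ℝ) * Real.log ((n : ℝ) / (N : ℝ))) / Real.log 2 := by gcongr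
        _ = (N : ℝ) * Real.logb 2 ((n : ℝ) / (N : ℝ)) := by rw [Real.logb]; ring
    rw [hinfo]
    linarith [h1, h3]
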